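/- Assume the Eisenbud–Green–Harris bound: let R = K[x₁,...,xₙ], and let I ⊆ R be a homogeneous ideal with dim_K (R/I)_{d+1} ≤ (dim_K (R/I)_d)^{(d)} for all d > 0 (Macaulay growth via the EGH operation). If I is generated by m linearly independent homogeneous quadrics, so dim_K(R/I)_2 = C(n+1,2) − m, and if α is the integer with C(n+1,2) − C(n−α,2) < m ≤ C(n+1,2) − C(n−α−1,2), then dim_K (R/I)_{n−α} = 0, i.e., (R/I)_d = 0 for all d ≥ n − α. -/

import Mathlib

open MvPolynomial

/-- The largest `a` with `C(a, d) ≤ ℓ`. -/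
def macaulayMax (ℓ d : ℕ) : ℕ :=
  Nat.findGreatest (fun a => Nat.choose a d ≤ ℓ) (ℓ + d)

/-- The Macaulay (EGH) operation `ℓ ↦ ℓ^(d)`: if `ℓ = C(ℓ_d, d) + ⋯ + C(ℓ_1, 1)` is
the Macaulay expansion, then `ℓ^(d) = C(ℓ_d, d+1) + ⋯ + C(ℓ_1, 2)`. -/
def macaulayOp : ℕ → ℕ → ℕ
  | _, 0 => 0
  | ℓ, 1 => ℓ.choose 2
  | ℓ, (d + 2) =>
      Nat.choose (macaulayMax ℓ (d + 2)) (d + 3) +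
        macaulayOp (ℓ - Nat.choose (macaulayMax ℓ (d + 2)) (d + 2)) (d + 1)

/-- `dim_K (R/I)_d`: the dimension of the degree-`d` graded piece of `R/I`. -/
noncomputable def hilbFn (K : Type*) [Field K] (n : ℕ)
    (I : Ideal (MvPolynomial (Fin n) K)) (d : ℕ) : ℕ :=
  Module.finrank K
    ((homogeneousSubmodule (Fin n) K d).map (Ideal.Quotient.mkₐ K I).toLinearMap)

lemma pascal (a k : ℕ) : (a + 1).choose (k + 1) = a.choose k + a.choose (k + 1) :=
  Nat.choose_succ_succ' a k

lemma lt_choose_add (ℓ e : ℕ) (he : 1 ≤ e) : ℓ < (ℓ + e).choose e := by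
  induction e with
  | zero => omega
  | succ k ih =>
    rcases Nat.eq_zero_or_pos k with hk | hk
    · subst hk; simp
    · have h1 := ih hk
      have h2 : (ℓ + k + 1).choose (k + 1) = (ℓ + k).choose k + (ℓ + k).choose (k + 1) :=
        pascal (ℓ + k) k
      have h3 : ℓ + (k + 1) = (ℓ + k) + 1 := by omega
      rw [h3, h2]
      omega

lemma macaulayMax_choose_le (ℓ d : ℕ) (hd : 1 ≤ d) : (macaulayMax ℓ d).choose d ≤ ℓ :=
  Nat.findGreatest_spec (P := fun a => Nat.choose a d ≤ ℓ) (Nat.zero_le _)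
    (by show Nat.choose 0 d ≤ ℓ; rw [Nat.choose_eq_zero_of_lt (by omega)]; exact Nat.zero_le _)

lemma lt_macaulayMax_succ (ℓ d : ℕ) (hd : 1 ≤ d) : ℓ < ((macaulayMax ℓ d) + 1).choose d := by
  by_contra h
  push_neg at h
  have ha : macaulayMax ℓ d ≤ ℓ + d :=
    Nat.findGreatest_le (P := fun a => Nat.choose a d ≤ ℓ) _
  have key : ∀ k, macaulayMax ℓ d < k → k ≤ ℓ + d → ¬ (Nat.choose k d ≤ ℓ) := fun k hk hk2 =>
    Nat.findGreatest_is_greatest (P := fun a => Nat.choose a d ≤ ℓ) hk hk2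
  rcases lt_or_ge (macaulayMax ℓ d) (ℓ + d) with hlt | hge
  · exact key _ (lt_add_one _) (by omega) h
  · have h1 := macaulayMax_choose_le ℓ d hd
    have h2 := lt_choose_add ℓ d hd
    have h3 : macaulayMax ℓ d = ℓ + d := le_antisymm ha hge
    rw [h3] at h1
    omega

lemma macaulayOp_zero : ∀ d, macaulayOp 0 d = 0
  | 0 => rfl
  | 1 => rfl
  | (d + 2) => by
    have h1 : (macaulayMax 0 (d + 2)).choose (d + 2) ≤ 0 :=
      macaulayMax_choose_le 0 (d + 2) (by omega)
    have h2 : macaulayMax 0 (d + 2) < d + 2 := Nat.choose_eq_zero_iff.mp (by omega)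
    show Nat.choose (macaulayMax 0 (d + 2)) (d + 3) +
        macaulayOp (0 - Nat.choose (macaulayMax 0 (d + 2)) (d + 2)) (d + 1) = 0
    rw [Nat.zero_sub, macaulayOp_zero (d + 1), Nat.choose_eq_zero_of_lt (by omega)]

lemma macaulayOp_le : ∀ e, 1 ≤ e → ∀ b ℓ : ℕ, ℓ ≤ b.choose e → macaulayOp ℓ e ≤ b.choose (e + 1) := by
  intro e
  induction e with
  | zero => omega
  | succ k ih =>
    intro _ b ℓ hℓ
    cases k with
    | zero =>
      show ℓ.choose 2 ≤ b.choose 2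
      exact Nat.choose_le_choose 2 (by simpa using hℓ)
    | succ j =>
      rcases Nat.eq_zero_or_pos ℓ with h0 | hpos
      · subst h0; rw [macaulayOp_zero]; exact Nat.zero_le _
      have h1 : (macaulayMax ℓ (j + 2)).choose (j + 2) ≤ ℓ :=
        macaulayMax_choose_le ℓ (j + 2) (by omega)
      have h2 : ℓ < ((macaulayMax ℓ (j + 2)) + 1).choose (j + 2) :=
        lt_macaulayMax_succ ℓ (j + 2) (by omega)
      set a := macaulayMax ℓ (j + 2) with ha
      have hop : macaulayOp ℓ (j + 2) =
          a.choose (j + 3) + macaulayOp (ℓ - a.choose (j + 2)) (j + 1) := rfl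
      have hgoal : macaulayOp ℓ (j + 2) ≤ b.choose (j + 3) → macaulayOp ℓ (j + 2) ≤ b.choose (j + 1 + 1 + 1) := fun h => h
      apply hgoal
      have hℓ' : ℓ ≤ b.choose (j + 2) := hℓ
      have hb : j + 2 ≤ b := by
        by_contra h
        push_neg at h
        have : b.choose (j + 2) = 0 := Nat.choose_eq_zero_of_lt h
        omega
      have hab : a ≤ b := by
        by_contra h
        push_neg at h
        have h3 : (b + 1).choose (j + 2) ≤ a.choose (j + 2) := Nat.choose_le_choose _ h
        have h4 : 0 < b.choose (j + 1) := Nat.choose_pos (by omega)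
        have h5 : (b + 1).choose (j + 2) = b.choose (j + 1) + b.choose (j + 2) := pascal b (j + 1)
        omega
      rcases eq_or_lt_of_le hab with heq | hlt
      · have hz : ℓ - a.choose (j + 2) = 0 := by rw [heq]; omega
        rw [hop, hz, macaulayOp_zero]
        have : a.choose (j + 3) ≤ b.choose (j + 3) := Nat.choose_le_choose _ hab
        omega
      · have h5 : (a + 1).choose (j + 2) = a.choose (j + 1) + a.choose (j + 2) := pascal a (j + 1)
        have hsub : ℓ - a.choose (j + 2) ≤ a.choose (j + 1) := by omega
        have h6 : macaulayOp (ℓ - a.choose (j + 2)) (j + 1) ≤ a.choose (j + 2) :=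
          ih (by omega) a (ℓ - a.choose (j + 2)) hsub
        have h7 : (a + 1).choose (j + 3) = a.choose (j + 2) + a.choose (j + 3) := pascal a (j + 2)
        have h8 : (a + 1).choose (j + 3) ≤ b.choose (j + 3) := Nat.choose_le_choose _ (by omega)
        rw [hop]
        omega

lemma macaulayOp_key {c μ : ℕ} (j : ℕ) (ℓ : ℕ) (hμ : μ < c)
    (hℓ : ℓ ≤ c.choose (j + 2) + μ.choose (j + 1)) :
    macaulayOp ℓ (j + 2) ≤ c.choose (j + 3) + μ.choose (j + 2) := by
  rcases Nat.eq_zero_or_pos ℓ with h0 | hpos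
  · subst h0; rw [macaulayOp_zero]; exact Nat.zero_le _
  have h1 : (macaulayMax ℓ (j + 2)).choose (j + 2) ≤ ℓ :=
    macaulayMax_choose_le ℓ (j + 2) (by omega)
  have h2 : ℓ < ((macaulayMax ℓ (j + 2)) + 1).choose (j + 2) :=
    lt_macaulayMax_succ ℓ (j + 2) (by omega)
  set a := macaulayMax ℓ (j + 2) with ha
  have hop : macaulayOp ℓ (j + 2) =
      a.choose (j + 3) + macaulayOp (ℓ - a.choose (j + 2)) (j + 1) := rfl
  have hac : a ≤ c := by
    by_contra h
    push_neg at h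
    have h3 : (c + 1).choose (j + 2) ≤ a.choose (j + 2) := Nat.choose_le_choose _ h
    have h4 : (c + 1).choose (j + 2) = c.choose (j + 1) + c.choose (j + 2) := pascal c (j + 1)
    rcases lt_or_ge c (j + 1) with hcj | hcj
    · have e1 : c.choose (j + 2) = 0 := Nat.choose_eq_zero_of_lt (by omega)
      have e2 : μ.choose (j + 1) = 0 := Nat.choose_eq_zero_of_lt (by omega)
      omega
    · have h5 : μ.choose (j + 1) ≤ (c - 1).choose (j + 1) := Nat.choose_le_choose _ (by omega)
      have h6 : (c - 1 + 1).choose (j + 1) = (c - 1).choose j + (c - 1).choose (j + 1) :=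
        pascal (c - 1) j
      have hc1 : c - 1 + 1 = c := by omega
      rw [hc1] at h6
      have h7 : 0 < (c - 1).choose j := Nat.choose_pos (by omega)
      omega
  rcases eq_or_lt_of_le hac with heq | hlt
  · have hsub : ℓ - a.choose (j + 2) ≤ μ.choose (j + 1) := by rw [heq]; omega
    have h6 : macaulayOp (ℓ - a.choose (j + 2)) (j + 1) ≤ μ.choose (j + 2) :=
      macaulayOp_le (j + 1) (by omega) μ _ hsub
    have h9 : a.choose (j + 3) ≤ c.choose (j + 3) := Nat.choose_le_choose _ hac
    rw [hop]
    omega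
  · have h5 : (a + 1).choose (j + 2) = a.choose (j + 1) + a.choose (j + 2) := pascal a (j + 1)
    have hsub : ℓ - a.choose (j + 2) ≤ a.choose (j + 1) := by omega
    have h6 : macaulayOp (ℓ - a.choose (j + 2)) (j + 1) ≤ a.choose (j + 2) :=
      macaulayOp_le (j + 1) (by omega) a _ hsub
    have h7 : (a + 1).choose (j + 3) = a.choose (j + 2) + a.choose (j + 3) := pascal a (j + 2)
    have h8 : (a + 1).choose (j + 3) ≤ c.choose (j + 3) := Nat.choose_le_choose _ (by omega)
    rw [hop]
    omega
lemma homog_le_span (K : Type*) [Field K] (n d : ℕ) :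
    homogeneousSubmodule (Fin n) K d ≤
      Submodule.span K (Set.range (fun σ : Sym (Fin n) d =>
        (monomial (Multiset.toFinsupp (σ : Multiset (Fin n))) (1 : K)))) := by
  intro p hp
  rw [mem_homogeneousSubmodule] at hp
  rw [← p.support_sum_monomial_coeff]
  apply Submodule.sum_mem
  intro s hs
  have hw : (Finsupp.weight 1) s = d := hp (MvPolynomial.mem_support_iff.mp hs)
  have hdeg : Multiset.card (Finsupp.toMultiset s) = d := by
    rw [Finsupp.card_toMultiset]
    erw [← Finsupp.degree_eq_weight_one] at hw
    simpa [Finsupp.degree_apply, Finsupp.sum] using hw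
  have hmono : (monomial s) (coeff s p) = (coeff s p) • ((monomial s) (1 : K)) := by
    rw [smul_monomial, smul_eq_mul, mul_one]
  rw [hmono]
  refine Submodule.smul_mem _ _ (Submodule.subset_span ?_)
  refine ⟨⟨Finsupp.toMultiset s, hdeg⟩, ?_⟩
  simp

lemma homog_findim (K : Type*) [Field K] (n d : ℕ) :
    FiniteDimensional K (homogeneousSubmodule (Fin n) K d) := by
  haveI : FiniteDimensional K (Submodule.span K (Set.range (fun σ : Sym (Fin n) d =>
        (monomial (Multiset.toFinsupp (σ : Multiset (Fin n))) (1 : K))))) :=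
    FiniteDimensional.span_of_finite K (Set.finite_range _)
  exact Submodule.finiteDimensional_of_le (homog_le_span K n d)

lemma finrank_homog_le (K : Type*) [Field K] (n d : ℕ) :
    Module.finrank K (homogeneousSubmodule (Fin n) K d) ≤ (n + d - 1).choose d := by
  classical
  set g : Sym (Fin n) d → MvPolynomial (Fin n) K :=
    fun σ => monomial (Multiset.toFinsupp (σ : Multiset (Fin n))) (1 : K) with hg
  haveI : FiniteDimensional K (Submodule.span K (Set.range g)) :=
    FiniteDimensional.span_of_finite K (Set.finite_range g)
  have h1 : Module.finrank K (homogeneousSubmodule (Fin n) K d) ≤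
      Module.finrank K (Submodule.span K (Set.range g)) :=
    Submodule.finrank_mono (homog_le_span K n d)
  have h2 : Module.finrank K (Submodule.span K (Set.range g)) ≤ (Set.range g).toFinset.card :=
    finrank_span_le_card _
  have h3 : (Set.range g).toFinset.card ≤ Fintype.card (Sym (Fin n) d) := by
    rw [Set.toFinset_range]
    exact Finset.card_image_le.trans (le_of_eq Finset.card_univ)
  have h4 : Fintype.card (Sym (Fin n) d) = (n + d - 1).choose d := by
    rw [Sym.card_sym_eq_choose, Fintype.card_fin]
  omega

/-- Eisenbud–Green–Harris bound: if `I ⊆ K[x₁,…,xₙ]` is generated by `m` linearly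
independent homogeneous quadrics and satisfies the Macaulay growth bound
`dim (R/I)_{d+1} ≤ (dim (R/I)_d)^(d)` for all `d > 0`, and `α` is the integer with
`C(n+1,2) − C(n−α,2) < m ≤ C(n+1,2) − C(n−α−1,2)`, then `(R/I)_d = 0` for all
`d ≥ n − α`. -/
theorem egh_vanishing (K : Type*) [Field K] (n m α : ℕ)
    (I : Ideal (MvPolynomial (Fin n) K))
    (hgrow : ∀ d : ℕ, 0 < d → hilbFn K n I (d + 1) ≤ macaulayOp (hilbFn K n I d) d)
    (f : Fin m → MvPolynomial (Fin n) K)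
    (hfhom : ∀ i, (f i).IsHomogeneous 2)
    (hfind : LinearIndependent K f)
    (hspan : I = Ideal.span (Set.range f))
    (hα1 : (n + 1).choose 2 - (n - α).choose 2 < m)
    (hα2 : m ≤ (n + 1).choose 2 - (n - α - 1).choose 2) :
    ∀ d : ℕ, n - α ≤ d →
      (homogeneousSubmodule (Fin n) K d).map (Ideal.Quotient.mkₐ K I).toLinearMap
        = ⊥ := by
  classical
  have hna2 : 2 ≤ n - α := by
    by_contra h
    push_neg at h
    have e1 : (n - α).choose 2 = 0 := Nat.choose_eq_zero_of_lt (by omega)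
    have e2 : (n - α - 1).choose 2 = 0 := Nat.choose_eq_zero_of_lt (by omega)
    omega
  set c := n - α - 1 with hc
  have hcn : n - α = c + 1 := by omega
  have hc1 : 1 ≤ c := by omega
  rw [hcn] at hα1
  have hpas : (c + 1).choose 2 = c + c.choose 2 := by
    have := pascal c 1
    rwa [Nat.choose_one_right] at this
  have hCle : (c + 1).choose 2 ≤ (n + 1).choose 2 := Nat.choose_le_choose _ (by omega)
  set μ := (n + 1).choose 2 - c.choose 2 - m with hμ
  have hμc : μ < c := by omega
  -- Step A: dimension bound in degree 2
  have hA : hilbFn K n I 2 + m ≤ (n + 1).choose 2 := by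
    set V := homogeneousSubmodule (Fin n) K 2 with hV
    haveI : FiniteDimensional K V := homog_findim K n 2
    set φ : V →ₗ[K] (MvPolynomial (Fin n) K ⧸ I) :=
      (Ideal.Quotient.mkₐ K I).toLinearMap ∘ₗ V.subtype with hφ
    have hr : LinearMap.range φ = V.map (Ideal.Quotient.mkₐ K I).toLinearMap := by
      rw [hφ, LinearMap.range_comp, Submodule.range_subtype]
    have hrank := LinearMap.finrank_range_add_finrank_ker φ
    have hh : hilbFn K n I 2 = Module.finrank K (LinearMap.range φ) := by
      rw [hr]; rfl
    set f' : Fin m → V := fun i => ⟨f i, (mem_homogeneousSubmodule _ _).mpr (hfhom i)⟩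
      with hf'
    have hli : LinearIndependent K f' := by
      apply LinearIndependent.of_comp V.subtype
      exact hfind
    have hker : Submodule.span K (Set.range f') ≤ LinearMap.ker φ := by
      rw [Submodule.span_le]
      rintro _ ⟨i, rfl⟩
      simp only [SetLike.mem_coe, LinearMap.mem_ker]
      show (Ideal.Quotient.mkₐ K I) (f i) = 0
      rw [Ideal.Quotient.mkₐ_eq_mk, Ideal.Quotient.eq_zero_iff_mem, hspan]
      exact Ideal.subset_span ⟨i, rfl⟩
    have hm : m ≤ Module.finrank K (LinearMap.ker φ) := by
      have hcard := finrank_span_eq_card hli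
      rw [Fintype.card_fin] at hcard
      calc m = Module.finrank K (Submodule.span K (Set.range f')) := hcard.symm
        _ ≤ _ := Submodule.finrank_mono hker
    have hV2 : Module.finrank K V ≤ (n + 1).choose 2 := by
      have h := finrank_homog_le K n 2
      have : n + 2 - 1 = n + 1 := by omega
      rwa [this] at h
    omega
  have hbase : hilbFn K n I 2 ≤ c.choose 2 + μ.choose 1 := by
    rw [Nat.choose_one_right]
    omega
  have hbound : ∀ j : ℕ, hilbFn K n I (j + 2) ≤ c.choose (j + 2) + μ.choose (j + 1) := by
    intro j
    induction j with
    | zero => exact hbase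
    | succ k ihk =>
      have hg : hilbFn K n I (k + 3) ≤ macaulayOp (hilbFn K n I (k + 2)) (k + 2) :=
        hgrow (k + 2) (by omega)
      have hk2 : macaulayOp (hilbFn K n I (k + 2)) (k + 2) ≤
          c.choose (k + 3) + μ.choose (k + 2) :=
        macaulayOp_key k (hilbFn K n I (k + 2)) hμc ihk
      show hilbFn K n I (k + 3) ≤ c.choose (k + 3) + μ.choose (k + 2)
      omega
  have hvan : hilbFn K n I (c + 1) = 0 := by
    have hb := hbound (c - 1)
    have e0 : c - 1 + 2 = c + 1 := by omega
    have e0' : c - 1 + 1 = c := by omega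
    rw [e0, e0'] at hb
    have e1 : c.choose (c + 1) = 0 := Nat.choose_eq_zero_of_lt (by omega)
    have e2 : μ.choose c = 0 := Nat.choose_eq_zero_of_lt (by omega)
    omega
  have hzero : ∀ d : ℕ, c + 1 ≤ d → hilbFn K n I d = 0 := by
    intro d hd
    induction d, hd using Nat.le_induction with
    | base => exact hvan
    | succ e he ih =>
      have hg : hilbFn K n I (e + 1) ≤ macaulayOp (hilbFn K n I e) e := hgrow e (by omega)
      rw [ih, macaulayOp_zero] at hg
      omega
  intro d hd
  rw [hcn] at hd
  have h0 : hilbFn K n I d = 0 := hzero d hd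
  haveI : NoZeroSMulDivisors K (MvPolynomial (Fin n) K ⧸ I) := by
    constructor
    intro a x h
    rcases eq_or_ne a 0 with ha | ha
    · exact Or.inl ha
    · right
      have h2 := congrArg (fun y => a⁻¹ • y) h
      simpa [smul_smul, inv_mul_cancel₀ ha] using h2
  haveI : FiniteDimensional K (homogeneousSubmodule (Fin n) K d) := homog_findim K n d
  exact Submodule.finrank_eq_zero.mp h0
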